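/- arXiv:1510.05576 — 3 statements merged into one kernel-verified Lean document; each statement's English description precedes it below -/
import Mathlib

section
/- For every real s ∈ (0,1], Σ_{i≥1 : 2^{−i} < s} 2^{−i} √(log i) < s − s log s. -/
/-!
Statement 6: for every `s ∈ (0,1]`,
`Σ_{i ≥ 1 : 2^{-i} < s} 2^{-i} √(log i) < s - s log s`,
where the sum runs over positive integers and `log` is the natural logarithm.
-/

private lemma sqrt_le_half_aux (c x : ℝ) (hc : 0 < c) (hx : 0 ≤ x) :
    Real.sqrt x ≤ (c + x / c) / 2 := by
  have h1 : Real.sqrt x ^ 2 = x := Real.sq_sqrt hx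
  have h2 := sq_nonneg (Real.sqrt x - c)
  have hxc : x / c * c = x := div_mul_cancel₀ x hc.ne'
  nlinarith [Real.sqrt_nonneg x, hc]

private lemma strictMonoOn_entropy {a : ℝ} (ha : 0 < a) :
    StrictMonoOn (fun t : ℝ => t - t * Real.log t) (Set.Icc a 1) := by
  apply strictMonoOn_of_deriv_pos (convex_Icc a 1)
  · apply ContinuousOn.sub continuousOn_id
    apply ContinuousOn.mul continuousOn_id
    apply Real.continuousOn_log.mono
    intro t ht
    simp only [Set.mem_compl_iff, Set.mem_singleton_iff]
    have := ht.1
    intro h; rw [h] at this; linarith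
  · intro t ht
    rw [interior_Icc] at ht
    have h0 : 0 < t := lt_trans ha ht.1
    have hd : HasDerivAt (fun t : ℝ => t - t * Real.log t)
        (1 - (1 * Real.log t + t * t⁻¹)) t :=
      (hasDerivAt_id t).sub ((hasDerivAt_id t).mul (Real.hasDerivAt_log h0.ne'))
    rw [hd.deriv]
    have hlog : Real.log t < 0 := Real.log_neg h0 ht.2
    have htt : t * t⁻¹ = 1 := mul_inv_cancel₀ h0.ne'
    rw [htt]
    linarith

theorem sum_pow_sqrt_log_lt (s : ℝ) (hs₀ : 0 < s) (hs₁ : s ≤ 1) :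
    (∑' i : ℕ, if 1 ≤ i ∧ (2 : ℝ) ^ (-(i : ℤ)) < s then
        (2 : ℝ) ^ (-(i : ℤ)) * Real.sqrt (Real.log i) else 0) <
      s - s * Real.log s := by
  have hcast : ∀ i : ℕ, (2:ℝ) ^ (-(i:ℤ)) = (1/2:ℝ) ^ i := by
    intro i
    rw [zpow_neg, zpow_natCast, one_div, inv_pow]
  set x : ℝ := 1/2 with hxdef
  have hx0 : (0:ℝ) < x := by norm_num
  have hx1 : x < 1 := by norm_num
  -- least n with `1 ≤ n` and `x^n < s`
  have hPex : ∃ i : ℕ, 1 ≤ i ∧ x ^ i < s := by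
    obtain ⟨k, hk⟩ := exists_pow_lt_of_lt_one hs₀ hx1
    exact ⟨k+1, Nat.le_add_left 1 k,
      lt_of_le_of_lt (pow_le_pow_of_le_one hx0.le hx1.le (Nat.le_succ k)) hk⟩
  set n := Nat.find hPex with hndef
  obtain ⟨hn1, hns⟩ := Nat.find_spec hPex
  have hmin : ∀ i : ℕ, 1 ≤ i → x ^ i < s → n ≤ i := fun i h1 h2' =>
    Nat.find_min' hPex ⟨h1, h2'⟩
  set L := Real.log 2 with hLdef
  have hL : 0 < L := Real.log_pos (by norm_num)
  have hn1R : (1:ℝ) ≤ (n:ℝ) := by exact_mod_cast hn1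
  have hnL : 0 < (n:ℝ) * L := mul_pos (by linarith) hL
  set c := Real.sqrt ((n:ℝ) * L) with hcdef
  have hc : 0 < c := Real.sqrt_pos.mpr hnL
  have hc2 : c ^ 2 = (n:ℝ) * L := Real.sq_sqrt hnL.le
  set F : ℕ → ℝ := fun i => x ^ i * ((c + ((i:ℝ) - 1) * L / c) / 2) with hFdef
  set g : ℕ → ℝ := fun i => if n ≤ i then F i else 0 with hgdef
  have hgnonneg : ∀ i, 0 ≤ g i := by
    intro i
    simp only [hgdef]
    split
    · next h =>
      have hi1 : 1 ≤ i := le_trans hn1 h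
      have hi1R : (1:ℝ) ≤ (i:ℝ) := by exact_mod_cast hi1
      apply mul_nonneg (pow_pos hx0 i).le
      apply div_nonneg _ (by norm_num)
      apply add_nonneg hc.le
      apply div_nonneg (mul_nonneg (by linarith) hL.le) hc.le
    · exact le_refl 0
  -- termwise bound
  have hterm : ∀ i : ℕ,
      (if 1 ≤ i ∧ (2:ℝ) ^ (-(i:ℤ)) < s then
        (2:ℝ) ^ (-(i:ℤ)) * Real.sqrt (Real.log i) else 0) ≤ g i := by
    intro i
    rw [hcast i]
    split
    · next h =>
      obtain ⟨hi1, his⟩ := h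
      have hni : n ≤ i := hmin i hi1 his
      have hgi : g i = F i := if_pos hni
      rw [hgi]
      have hi1R : (1:ℝ) ≤ (i:ℝ) := by exact_mod_cast hi1
      have hlognn : 0 ≤ Real.log i := Real.log_nonneg hi1R
      have hile : (i:ℝ) ≤ 2 ^ (i-1) := by
        have h' : i ≤ 2 ^ (i-1) := by
          have := Nat.lt_two_pow_self (n := i-1)
          omega
        calc (i:ℝ) ≤ ((2^(i-1) : ℕ) : ℝ) := by exact_mod_cast h'
          _ = 2 ^ (i-1) := by push_cast; ring
      have hlogle : Real.log i ≤ ((i:ℝ) - 1) * L := by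
        calc Real.log i ≤ Real.log (2 ^ (i-1)) := Real.log_le_log (by linarith) hile
          _ = ((i - 1 : ℕ) : ℝ) * L := by rw [Real.log_pow]
          _ = ((i:ℝ) - 1) * L := by rw [Nat.cast_sub hi1, Nat.cast_one]
      have hsq : Real.sqrt (Real.log i) ≤ (c + ((i:ℝ) - 1) * L / c) / 2 := by
        refine le_trans (sqrt_le_half_aux c _ hc hlognn) ?_
        gcongr
      calc x ^ i * Real.sqrt (Real.log i)
          ≤ x ^ i * ((c + ((i:ℝ) - 1) * L / c) / 2) := by
            exact mul_le_mul_of_nonneg_left hsq (pow_pos hx0 i).le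
        _ = F i := rfl
    · exact hgnonneg i
  -- sum of g
  have hinj : Function.Injective (fun j : ℕ => n + j) := fun a b h => by
    simpa using h
  have hran : ∀ i, i ∉ Set.range (fun j : ℕ => n + j) → g i = 0 := by
    intro i hi
    have hlt : i < n := by
      by_contra h
      push_neg at h
      exact hi ⟨i - n, Nat.add_sub_cancel' h⟩
    simp [hgdef, Nat.not_le.mpr hlt]
  set a : ℝ := x ^ n * ((c + ((n:ℝ) - 1) * L / c) / 2) with hadef
  set b : ℝ := x ^ n * (L / c / 2) with hbdef
  have hgcomp : ∀ j : ℕ, g (n + j) = a * x ^ j + b * ((j:ℝ) * x ^ j) := by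
    intro j
    have h1 : g (n + j) = F (n + j) := if_pos (Nat.le_add_right n j)
    rw [h1, hFdef, hadef, hbdef]
    simp only
    rw [pow_add]
    push_cast
    field_simp
    ring
  have hnormx : ‖x‖ < 1 := by rw [Real.norm_eq_abs, hxdef, abs_of_pos] <;> norm_num
  have hsum1 : Summable (fun j : ℕ => x ^ j) := summable_geometric_of_lt_one hx0.le hx1
  have hsum2 : Summable (fun j : ℕ => (j:ℝ) * x ^ j) :=
    (hasSum_coe_mul_geometric_of_norm_lt_one hnormx).summable
  have hcompsum : Summable (fun j : ℕ => g (n + j)) := by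
    rw [show (fun j : ℕ => g (n + j)) = fun j : ℕ => a * x ^ j + b * ((j:ℝ) * x ^ j)
      from funext hgcomp]
    exact (hsum1.mul_left a).add (hsum2.mul_left b)
  have hgsummable : Summable g := (hinj.summable_iff hran).mp hcompsum
  have htsumg : ∑' i, g i = x ^ n * (c + (n:ℝ) * L / c) := by
    have hsupp : Function.support g ⊆ Set.range (fun j : ℕ => n + j) := by
      intro i hi
      by_contra h
      exact hi (hran i h)
    rw [← hinj.tsum_eq hsupp]
    calc (∑' j : ℕ, g (n + j))
        = ∑' j : ℕ, (a * x ^ j + b * ((j:ℝ) * x ^ j)) := tsum_congr hgcomp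
      _ = a * ∑' j : ℕ, x ^ j + b * ∑' j : ℕ, (j:ℝ) * x ^ j := by
          rw [Summable.tsum_add (hsum1.mul_left a) (hsum2.mul_left b), tsum_mul_left, tsum_mul_left]
      _ = a * 2 + b * 2 := by
          rw [tsum_geometric_of_lt_one hx0.le hx1,
            tsum_coe_mul_geometric_of_norm_lt_one hnormx]
          norm_num [hxdef]
      _ = x ^ n * (c + (n:ℝ) * L / c) := by
          rw [hadef, hbdef]
          field_simp
          ring
  -- LHS summable
  have hLHSnonneg : ∀ i : ℕ, 0 ≤ (if 1 ≤ i ∧ (2:ℝ) ^ (-(i:ℤ)) < s then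
      (2:ℝ) ^ (-(i:ℤ)) * Real.sqrt (Real.log i) else 0) := by
    intro i
    split
    · positivity
    · exact le_refl 0
  have hLHSsummable : Summable (fun i : ℕ => if 1 ≤ i ∧ (2:ℝ) ^ (-(i:ℤ)) < s then
      (2:ℝ) ^ (-(i:ℤ)) * Real.sqrt (Real.log i) else 0) :=
    Summable.of_nonneg_of_le hLHSnonneg hterm hgsummable
  have hmain : (∑' i : ℕ, if 1 ≤ i ∧ (2:ℝ) ^ (-(i:ℤ)) < s then
      (2:ℝ) ^ (-(i:ℤ)) * Real.sqrt (Real.log i) else 0) ≤ x ^ n * (c + (n:ℝ) * L / c) := by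
    rw [← htsumg]
    exact Summable.tsum_le_tsum hterm hLHSsummable hgsummable
  -- chain of inequalities
  have hceq : (n:ℝ) * L / c = c := by
    rw [← hc2]; field_simp
  have h2c : 2 * c ≤ 1 + (n:ℝ) * L := by nlinarith [sq_nonneg (c - 1)]
  have hstep : x ^ n * (c + (n:ℝ) * L / c) ≤ x ^ n * (1 + (n:ℝ) * L) := by
    rw [hceq]
    apply mul_le_mul_of_nonneg_left _ (pow_pos hx0 n).le
    linarith
  have hlogxn : Real.log (x ^ n) = -((n:ℝ) * L) := by
    rw [Real.log_pow, hxdef, one_div, Real.log_inv, hLdef]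
    ring
  have hfval : x ^ n - x ^ n * Real.log (x ^ n) = x ^ n * (1 + (n:ℝ) * L) := by
    rw [hlogxn]; ring
  have hxn1 : x ^ n ≤ 1 := pow_le_one₀ hx0.le hx1.le
  have hlt : x ^ n - x ^ n * Real.log (x ^ n) < s - s * Real.log s :=
    strictMonoOn_entropy (pow_pos hx0 n) ⟨le_refl _, hxn1⟩ ⟨hns.le, hs₁⟩ hns
  calc (∑' i : ℕ, if 1 ≤ i ∧ (2:ℝ) ^ (-(i:ℤ)) < s then
      (2:ℝ) ^ (-(i:ℤ)) * Real.sqrt (Real.log i) else 0)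
      ≤ x ^ n * (c + (n:ℝ) * L / c) := hmain
    _ ≤ x ^ n * (1 + (n:ℝ) * L) := hstep
    _ = x ^ n - x ^ n * Real.log (x ^ n) := hfval.symm
    _ < s - s * Real.log s := hlt
end

section
/- Σ_{t=1}^n σ_t (c − log σ_t) ≤ √(n B) ( c + ½ log(n / B) ). -/
/-!
Statement 10: if `n ≥ 1`, `c ≥ 1`, `0 < B ≤ n`, and `0 < σ_t ≤ 1` with
`Σ_{t=1}^n σ_t² ≤ B`, then `Σ_{t=1}^n σ_t (c - log σ_t) ≤ √(nB) (c + ½ log(n/B))`.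
-/

lemma key_pt (a x c : ℝ) (ha : 0 < a) (ha1 : a ≤ 1) (hx : 0 < x) (hc : 1 ≤ c) :
    x * (c - Real.log x) ≤ a * (c - Real.log a) +
      (c - 1 - Real.log a) / (2 * a) * (x ^ 2 - a ^ 2) := by
  have hL : Real.log a ≤ 0 := Real.log_nonpos ha.le ha1
  have hlog : Real.log x = Real.log a + Real.log (x / a) := by
    rw [Real.log_div hx.ne' ha.ne']; ring
  have hr : x - a ≤ x * Real.log (x / a) := by
    have h1 : Real.log (a / x) ≤ a / x - 1 := Real.log_le_sub_one_of_pos (by positivity)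
    have h2 : Real.log (a / x) = - Real.log (x / a) := by
      rw [Real.log_div ha.ne' hx.ne', Real.log_div hx.ne' ha.ne']; ring
    rw [h2] at h1
    have h3 := mul_le_mul_of_nonneg_left h1 hx.le
    have hax : x * (a / x) = a := by field_simp
    nlinarith
  set L := Real.log a with hLdef
  set R := Real.log (x / a) with hRdef
  rw [hlog]
  rw [← sub_nonneg]
  have hE : a * (c - L) + (c - 1 - L) / (2 * a) * (x ^ 2 - a ^ 2) - x * (c - (L + R))
      = ((c - 1 - L) * (x ^ 2 - a ^ 2) + 2 * a * (a * (c - L)) - 2 * a * (x * (c - (L + R))))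
        / (2 * a) := by
    field_simp
    ring
  rw [hE]
  apply div_nonneg _ (by positivity)
  nlinarith [mul_nonneg (by linarith : (0:ℝ) ≤ c - 1 - L) (sq_nonneg (x - a)),
    mul_le_mul_of_nonneg_left hr (by linarith : (0:ℝ) ≤ 2 * a)]

theorem sum_sigma_log_bound
    (n : ℕ) (hn : 1 ≤ n) (c : ℝ) (hc : 1 ≤ c) (B : ℝ) (hB₀ : 0 < B) (hB : B ≤ n)
    (σ : ℕ → ℝ)
    (hσ₀ : ∀ t ∈ Finset.Icc 1 n, 0 < σ t)
    (hσ₁ : ∀ t ∈ Finset.Icc 1 n, σ t ≤ 1)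
    (hσB : ∑ t ∈ Finset.Icc 1 n, σ t ^ 2 ≤ B) :
    ∑ t ∈ Finset.Icc 1 n, σ t * (c - Real.log (σ t)) ≤
      Real.sqrt ((n : ℝ) * B) * (c + (1 / 2) * Real.log ((n : ℝ) / B)) := by
  have hn0 : (0:ℝ) < n := by exact_mod_cast Nat.lt_of_lt_of_le Nat.zero_lt_one hn
  set a : ℝ := Real.sqrt (B / n) with hadef
  have ha0 : 0 < a := Real.sqrt_pos.2 (by positivity)
  have ha2 : a ^ 2 = B / n := Real.sq_sqrt (by positivity)
  have ha1 : a ≤ 1 := by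
    rw [show (1:ℝ) = Real.sqrt 1 by simp [Real.sqrt_one]]
    exact Real.sqrt_le_sqrt (by rw [div_le_one hn0]; exact hB)
  set L := Real.log a with hLdef
  have hL : L ≤ 0 := Real.log_nonpos ha0.le ha1
  have hlam : 0 ≤ (c - 1 - L) / (2 * a) := by
    apply div_nonneg (by linarith) (by positivity)
  have hsum : ∑ t ∈ Finset.Icc 1 n, σ t * (c - Real.log (σ t)) ≤
      ∑ t ∈ Finset.Icc 1 n,
        (a * (c - L) + (c - 1 - L) / (2 * a) * ((σ t) ^ 2 - a ^ 2)) :=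
    Finset.sum_le_sum fun t ht => key_pt a (σ t) c ha0 ha1 (hσ₀ t ht) hc
  have hcard : (Finset.Icc 1 n).card = n := by
    rw [Nat.card_Icc]; omega
  have hsum2 : ∑ t ∈ Finset.Icc 1 n,
      (a * (c - L) + (c - 1 - L) / (2 * a) * ((σ t) ^ 2 - a ^ 2))
      = (n : ℝ) * (a * (c - L)) + (c - 1 - L) / (2 * a) *
          ((∑ t ∈ Finset.Icc 1 n, (σ t) ^ 2) - (n : ℝ) * a ^ 2) := by
    rw [Finset.sum_add_distrib, Finset.sum_const, hcard, ← Finset.mul_sum,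
      Finset.sum_sub_distrib, Finset.sum_const, hcard]
    push_cast
    ring
  have hna2 : (n : ℝ) * a ^ 2 = B := by
    rw [ha2]; field_simp
  have hnonpos : (c - 1 - L) / (2 * a) *
      ((∑ t ∈ Finset.Icc 1 n, (σ t) ^ 2) - (n : ℝ) * a ^ 2) ≤ 0 := by
    apply mul_nonpos_of_nonneg_of_nonpos hlam
    rw [hna2]; linarith
  have hfin : (n : ℝ) * (a * (c - L)) =
      Real.sqrt ((n : ℝ) * B) * (c + (1 / 2) * Real.log ((n : ℝ) / B)) := by
    have h1 : Real.sqrt ((n : ℝ) * B) = (n : ℝ) * a := by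
      rw [hadef, show (n : ℝ) * B = ((n:ℝ))^2 * (B / n) by field_simp,
        Real.sqrt_mul (by positivity), Real.sqrt_sq hn0.le]
    have h2 : L = - (1 / 2) * Real.log ((n : ℝ) / B) := by
      rw [hLdef, hadef, Real.log_sqrt (by positivity),
        Real.log_div (by positivity) (by positivity),
        Real.log_div (by positivity) (by positivity)]
      ring
    rw [h1, h2]; ring
  calc ∑ t ∈ Finset.Icc 1 n, σ t * (c - Real.log (σ t))
      ≤ (n : ℝ) * (a * (c - L)) + (c - 1 - L) / (2 * a) *
          ((∑ t ∈ Finset.Icc 1 n, (σ t) ^ 2) - (n : ℝ) * a ^ 2) := by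
        rw [← hsum2]; exact hsum
    _ ≤ (n : ℝ) * (a * (c - L)) := by linarith
    _ = _ := hfin
end

section
/- Any greedy sequence terminates with a dominating set of G of cardinality k ≤ (1 + log(Δ + 1)) · γ(G), where log is the natural logarithm. -/
/-!
Statement 11: the greedy algorithm for dominating sets terminates with a dominating
set of cardinality `k ≤ (1 + log(Δ + 1)) γ(G)`, where `Δ` is the maximum degree of
the finite simple graph `G`, `γ(G)` its domination number, and `log` the natural
logarithm.
-/

noncomputable section

/-- The set of vertices dominated by `S`: vertices of `S` together with their
neighbors. -/
def dominatedSet {V : Type*} [Fintype V] [DecidableEq V] (G : SimpleGraph V)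
    [DecidableRel G.Adj] (S : Finset V) : Finset V :=
  Finset.univ.filter (fun u => u ∈ S ∨ ∃ w ∈ S, G.Adj u w)

/-- `S` is a dominating set of `G`. -/
def IsDominatingSet {V : Type*} (G : SimpleGraph V) (S : Finset V) : Prop :=
  ∀ v : V, v ∈ S ∨ ∃ u ∈ S, G.Adj v u

/-- The domination number `γ(G)`: minimal cardinality of a dominating set. -/
def dominationNumber {V : Type*} (G : SimpleGraph V) : ℕ :=
  sInf {m | ∃ S : Finset V, IsDominatingSet G S ∧ S.card = m}

theorem greedy_dominating_set_bound
    {V : Type*} [Fintype V] [DecidableEq V]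
    (G : SimpleGraph V) [DecidableRel G.Adj]
    (k : ℕ) (v : ℕ → V)
    -- the greedy choice: `v j` (the `(j+1)`-st chosen vertex) maximizes the number
    -- of not-yet-dominated vertices in its closed neighborhood
    (hgreedy : ∀ j < k, ∀ w : V,
      ((Finset.univ \ dominatedSet G ((Finset.range j).image v)).filter
          (fun u => u = w ∨ G.Adj u w)).card ≤
        ((Finset.univ \ dominatedSet G ((Finset.range j).image v)).filter
          (fun u => u = v j ∨ G.Adj u (v j))).card)
    -- the sequence stops at the first index `k` at which everything is dominated
    (hstop : dominatedSet G ((Finset.range k).image v) = Finset.univ)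
    (hfirst : ∀ j < k, dominatedSet G ((Finset.range j).image v) ≠ Finset.univ) :
    IsDominatingSet G ((Finset.range k).image v) ∧
      (k : ℝ) ≤ (1 + Real.log ((G.maxDegree : ℝ) + 1)) * dominationNumber G := by
  classical
  set γ := dominationNumber G with hγdef
  obtain ⟨S, hS, hScard⟩ : ∃ S : Finset V, IsDominatingSet G S ∧ S.card = γ := by
    have hne : {m | ∃ S : Finset V, IsDominatingSet G S ∧ S.card = m}.Nonempty :=
      ⟨(Finset.univ : Finset V).card, Finset.univ,
        fun u => Or.inl (Finset.mem_univ u), rfl⟩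
    exact Nat.sInf_mem hne
  set Δ := G.maxDegree with hΔdef
  set D : ℕ → Finset V := fun j => dominatedSet G ((Finset.range j).image v) with hD
  set U : ℕ → Finset V := fun j => Finset.univ \ D j with hU
  set n : ℕ → ℕ := fun j => (U j).card with hn
  set g : ℕ → ℕ := fun j => ((U j).filter (fun u => u = v j ∨ G.Adj u (v j))).card with hg
  -- membership in D (j+1)
  have hDsucc : ∀ j u, (u ∈ D (j+1)) ↔ (u ∈ D j ∨ (u = v j ∨ G.Adj u (v j))) := by
    intro j u
    simp only [hD, dominatedSet, Finset.mem_filter, Finset.mem_univ, true_and,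
      Finset.mem_image, Finset.mem_range]
    constructor
    · rintro (⟨a, ha, rfl⟩ | ⟨w, ⟨a, ha, rfl⟩, hadj⟩)
      · rcases Nat.lt_succ_iff_lt_or_eq.1 ha with h | rfl
        · exact Or.inl (Or.inl ⟨a, h, rfl⟩)
        · exact Or.inr (Or.inl rfl)
      · rcases Nat.lt_succ_iff_lt_or_eq.1 ha with h | rfl
        · exact Or.inl (Or.inr ⟨v a, ⟨a, h, rfl⟩, hadj⟩)
        · exact Or.inr (Or.inr hadj)
    · rintro ((⟨a, ha, rfl⟩ | ⟨w, ⟨a, ha, rfl⟩, hadj⟩) | rfl | hadj)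
      · exact Or.inl ⟨a, Nat.lt_succ_of_lt ha, rfl⟩
      · exact Or.inr ⟨v a, ⟨a, Nat.lt_succ_of_lt ha, rfl⟩, hadj⟩
      · exact Or.inl ⟨j, Nat.lt_succ_self j, rfl⟩
      · exact Or.inr ⟨v j, ⟨j, Nat.lt_succ_self j, rfl⟩, hadj⟩
  have hUsucc : ∀ j, U (j+1) = (U j).filter (fun u => ¬(u = v j ∨ G.Adj u (v j))) := by
    intro j
    ext u
    simp only [hU, Finset.mem_sdiff, Finset.mem_univ, true_and, Finset.mem_filter,
      hDsucc]
    tauto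
  have hnstep : ∀ j, n j = g j + n (j+1) := by
    intro j
    simp only [hn, hg, hUsucc]
    exact (Finset.card_filter_add_card_filter_not
      (p := fun u => u = v j ∨ G.Adj u (v j))).symm
  -- greedy gain is at least the average
  have havg : ∀ j < k, n j ≤ γ * g j := by
    intro j hj
    have hcover : U j ⊆ S.biUnion (fun s => (U j).filter (fun u => u = s ∨ G.Adj u s)) := by
      intro u hu
      rcases hS u with hus | ⟨s, hsS, hadj⟩
      · exact Finset.mem_biUnion.2 ⟨u, hus, Finset.mem_filter.2 ⟨hu, Or.inl rfl⟩⟩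
      · exact Finset.mem_biUnion.2 ⟨s, hsS, Finset.mem_filter.2 ⟨hu, Or.inr hadj⟩⟩
    calc n j ≤ (S.biUnion (fun s => (U j).filter (fun u => u = s ∨ G.Adj u s))).card :=
          Finset.card_le_card hcover
      _ ≤ ∑ s ∈ S, ((U j).filter (fun u => u = s ∨ G.Adj u s)).card :=
          Finset.card_biUnion_le
      _ ≤ ∑ _s ∈ S, g j := Finset.sum_le_sum (fun s _ => hgreedy j hj s)
      _ = γ * g j := by rw [Finset.sum_const, hScard, smul_eq_mul]
  -- initial bound
  have hn0 : n 0 ≤ (Δ + 1) * γ := by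
    have hcov : (Finset.univ : Finset V) ⊆
        S.biUnion (fun s => Finset.univ.filter (fun u => u = s ∨ G.Adj u s)) := by
      intro u _
      rcases hS u with hus | ⟨s, hsS, hadj⟩
      · exact Finset.mem_biUnion.2 ⟨u, hus,
          Finset.mem_filter.2 ⟨Finset.mem_univ u, Or.inl rfl⟩⟩
      · exact Finset.mem_biUnion.2 ⟨s, hsS,
          Finset.mem_filter.2 ⟨Finset.mem_univ u, Or.inr hadj⟩⟩
    have hclosed : ∀ s : V,
        (Finset.univ.filter (fun u => u = s ∨ G.Adj u s)).card ≤ Δ + 1 := by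
      intro s
      have hsub : Finset.univ.filter (fun u => u = s ∨ G.Adj u s) ⊆
          insert s (G.neighborFinset s) := by
        intro u hu
        rcases Finset.mem_filter.1 hu with ⟨_, (rfl | hadj)⟩
        · exact Finset.mem_insert_self _ _
        · exact Finset.mem_insert_of_mem
            ((SimpleGraph.mem_neighborFinset G s u).2 hadj.symm)
      calc (Finset.univ.filter (fun u => u = s ∨ G.Adj u s)).card
          ≤ (insert s (G.neighborFinset s)).card := Finset.card_le_card hsub
        _ ≤ (G.neighborFinset s).card + 1 := Finset.card_insert_le _ _
        _ = G.degree s + 1 := by rw [SimpleGraph.card_neighborFinset_eq_degree]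
        _ ≤ Δ + 1 := Nat.add_le_add_right (G.degree_le_maxDegree s) 1
    have h0 : U 0 ⊆ Finset.univ := Finset.sdiff_subset
    calc n 0 ≤ (Finset.univ : Finset V).card := Finset.card_le_card h0
      _ ≤ (S.biUnion (fun s => Finset.univ.filter (fun u => u = s ∨ G.Adj u s))).card :=
          Finset.card_le_card hcov
      _ ≤ ∑ s ∈ S, (Finset.univ.filter (fun u => u = s ∨ G.Adj u s)).card :=
          Finset.card_biUnion_le
      _ ≤ ∑ _s ∈ S, (Δ + 1) := Finset.sum_le_sum (fun s _ => hclosed s)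
      _ = γ * (Δ + 1) := by rw [Finset.sum_const, hScard, smul_eq_mul]
      _ = (Δ + 1) * γ := Nat.mul_comm _ _
  have hnk : n k = 0 := by
    simp only [hn, hU, hD, hstop, Finset.sdiff_self, Finset.card_empty]
  have hpos : ∀ j < k, 1 ≤ n j := by
    intro j hj
    rw [hn, Finset.one_le_card, hU, Finset.sdiff_nonempty]
    intro hsub
    exact hfirst j hj (Finset.univ_subset_iff.1 hsub)
  have hgpos : ∀ j < k, 1 ≤ g j := by
    intro j hj
    rcases Nat.eq_zero_or_pos (g j) with h0 | h1
    · have := havg j hj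
      rw [h0, Nat.mul_zero] at this
      have := hpos j hj
      omega
    · exact h1
  have hE : ∀ d j, j + d = k → k ≤ j + n j := by
    intro d
    induction d with
    | zero =>
      intro j hj
      have : j = k := by omega
      subst this
      omega
    | succ d ih =>
      intro j hj
      have hjk : j < k := by omega
      have h1 := hgpos j hjk
      have h2 := hnstep j
      have h3 := ih (j+1) (by omega)
      omega
  -- first conjunct
  have hdom : IsDominatingSet G ((Finset.range k).image v) := by
    intro u
    have hu : u ∈ dominatedSet G ((Finset.range k).image v) := by
      rw [hstop]; exact Finset.mem_univ u
    exact (Finset.mem_filter.1 hu).2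
  refine ⟨hdom, ?_⟩
  have hL0 : 0 ≤ Real.log ((Δ : ℝ) + 1) :=
    Real.log_nonneg (by linarith [Nat.cast_nonneg (α := ℝ) Δ])
  -- trivial case γ = 0
  rcases Nat.eq_zero_or_pos γ with hγ0 | hγ1
  · have hk0 : k = 0 := by
      by_contra hk
      have hk' : 0 < k := Nat.pos_of_ne_zero hk
      have := havg 0 hk'
      have := hpos 0 hk'
      rw [hγ0, Nat.zero_mul] at *
      omega
    rw [hk0, hγ0]
    push_cast
    simp
  -- main case: γ ≥ 1
  have hγR : (1 : ℝ) ≤ (γ : ℝ) := by exact_mod_cast hγ1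
  have hγRpos : (0 : ℝ) < (γ : ℝ) := lt_of_lt_of_le one_pos hγR
  have hγRne : (γ : ℝ) ≠ 0 := ne_of_gt hγRpos
  -- exponential decay
  have hdecay : ∀ j ≤ k, (n j : ℝ) ≤ ((Δ : ℝ) + 1) * γ * Real.exp (-(j : ℝ) / γ) := by
    intro j
    induction j with
    | zero =>
      intro _
      simp only [Nat.cast_zero, neg_zero, zero_div, Real.exp_zero, mul_one]
      exact_mod_cast hn0
    | succ j ih =>
      intro hjk
      have hjlt : j < k := by omega
      have hih := ih (le_of_lt hjlt)
      -- γ * n (j+1) + n j ≤ γ * n j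
      have hstepnat : γ * n (j+1) + n j ≤ γ * n j := by
        have h1 := havg j hjlt
        have h2 := hnstep j
        calc γ * n (j+1) + n j ≤ γ * n (j+1) + γ * g j := by omega
          _ = γ * n j := by rw [← Nat.mul_add]; rw [h2]; ring
      have hstepR : (n (j+1) : ℝ) ≤ (1 - 1/γ) * n j := by
        have : (γ : ℝ) * n (j+1) + n j ≤ γ * n j := by exact_mod_cast hstepnat
        have hh : (γ : ℝ) * n (j+1) ≤ (γ - 1) * n j := by linarith
        rw [show ((1:ℝ) - 1/γ) = (γ - 1)/γ by field_simp]
        rw [div_mul_eq_mul_div, le_div_iff₀ hγRpos]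
        linarith [hh]
      have hexp1 : (1 : ℝ) - 1/γ ≤ Real.exp (-(1/γ)) := by
        have := Real.add_one_le_exp (-(1/(γ:ℝ)))
        linarith
      have hnjnn : (0 : ℝ) ≤ (n j : ℝ) := Nat.cast_nonneg _
      have hchain : (n (j+1) : ℝ) ≤ Real.exp (-(1/γ)) * n j := by
        calc (n (j+1) : ℝ) ≤ (1 - 1/γ) * n j := hstepR
          _ ≤ Real.exp (-(1/γ)) * n j := mul_le_mul_of_nonneg_right hexp1 hnjnn
      calc (n (j+1) : ℝ) ≤ Real.exp (-(1/γ)) * n j := hchain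
        _ ≤ Real.exp (-(1/γ)) * (((Δ : ℝ) + 1) * γ * Real.exp (-(j : ℝ) / γ)) :=
            mul_le_mul_of_nonneg_left hih (le_of_lt (Real.exp_pos _))
        _ = ((Δ : ℝ) + 1) * γ * Real.exp (-((j:ℕ)+1 : ℝ) / γ) := by
            rw [show (-(((j:ℕ):ℝ)+1) / (γ:ℝ)) = -(1/γ) + (-(j : ℝ)/γ) by ring,
              Real.exp_add]
            ring
        _ = ((Δ : ℝ) + 1) * γ * Real.exp (-((j+1 : ℕ) : ℝ) / γ) := by push_cast; ring
  set L := Real.log ((Δ : ℝ) + 1) with hLdef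
  set x := (γ : ℝ) * L with hxdef
  have hx0 : 0 ≤ x := mul_nonneg (le_of_lt hγRpos) hL0
  have hgoal : (1 + L) * (γ : ℝ) = (γ : ℝ) + x := by rw [hxdef]; ring
  rw [hgoal]
  by_cases hkx : (k : ℝ) ≤ x
  · linarith
  · push_neg at hkx
    set j := ⌈x⌉₊ with hjdef
    have hjk : j ≤ k := Nat.ceil_le.2 (le_of_lt hkx)
    have hxj : x ≤ (j : ℝ) := Nat.le_ceil x
    have hkey : (n j : ℝ) ≤ (γ : ℝ) * Real.exp ((x - j) / γ) := by
      have h1 := hdecay j hjk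
      have hΔexp : ((Δ : ℝ) + 1) = Real.exp L := (Real.exp_log (by positivity)).symm
      calc (n j : ℝ) ≤ ((Δ : ℝ) + 1) * γ * Real.exp (-(j : ℝ) / γ) := h1
        _ = (γ : ℝ) * Real.exp ((x - j) / γ) := by
            rw [hΔexp, show ((x - (j:ℝ)) / (γ:ℝ)) = L + (-(j : ℝ)/γ) by
              rw [hxdef]; field_simp; ring, Real.exp_add]
            ring
    have hEj : (k : ℝ) ≤ (j : ℝ) + (n j : ℝ) := by
      have := hE (k - j) j (by omega)
      exact_mod_cast this
    rcases le_or_gt (j : ℝ) x with hjx | hjx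
    · -- j = x (as reals): n j ≤ γ
      have hxeq : x = (j : ℝ) := le_antisymm hxj hjx
      have : (n j : ℝ) ≤ (γ : ℝ) := by
        have : Real.exp ((x - j) / γ) = 1 := by
          rw [hxeq, sub_self, zero_div, Real.exp_zero]
        rw [this, mul_one] at hkey
        exact hkey
      linarith
    · -- x < j : n j < γ so n j ≤ γ - 1, and j < x + 1
      have hexplt : Real.exp ((x - (j:ℝ)) / γ) < 1 := by
        rw [Real.exp_lt_one_iff]
        apply div_neg_of_neg_of_pos _ hγRpos
        linarith
      have hnjlt : (n j : ℝ) < (γ : ℝ) := by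
        calc (n j : ℝ) ≤ (γ : ℝ) * Real.exp ((x - j) / γ) := hkey
          _ < (γ : ℝ) * 1 := by
              exact mul_lt_mul_of_pos_left hexplt hγRpos
          _ = (γ : ℝ) := mul_one _
      have hnjnat : n j < γ := by exact_mod_cast hnjlt
      have hnjR : (n j : ℝ) ≤ (γ : ℝ) - 1 := by
        have : n j + 1 ≤ γ := hnjnat
        have := (Nat.cast_le (α := ℝ)).2 this
        push_cast at this
        linarith
      have hjlt : (j : ℝ) < x + 1 := Nat.ceil_lt_add_one hx0
      linarith

end
end
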